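/- Let P be a normed space, suppose that for every λ ∈ Λ there exists d(λ) ≥ 0 with |⟨λ,p⟩| ≤ d(λ)‖p‖ for all p ∈ P, and let σ(p) = ‖p‖ (the sharp Lagrangian). Then an augmented Lagrange multiplier of the problem of minimizing f over A exists if and only if the penalty function F(x,r) := inf_{p ∈ P} (Φ(x,p) + r‖p‖) is exact, i.e. there exists r ≥ 0 such that F(x,r) ≥ f* for all x ∈ A. -/

import Mathlib

open Filter Topology Bornology Set

noncomputable section

/-- The augmented Lagrangian `𝓛(x, λ, r) = inf_p (Φ(x,p) − ⟨λ,p⟩ + r σ(p))`. -/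
def AugLagr {X P L : Type*} [AddCommGroup P] [Module ℝ P] [AddCommGroup L] [Module ℝ L]
    (Φ : X × P → EReal) (B : L →ₗ[ℝ] P →ₗ[ℝ] ℝ) (σ : P → EReal)
    (x : X) (lam : L) (r : ℝ) : EReal :=
  ⨅ p : P, Φ (x, p) - ((B lam p : ℝ) : EReal) + (r : EReal) * σ p

/-- The optimal value (perturbation) function `v(p) = inf_{x ∈ A} Φ(x,p)`. -/
def OptVal {X P : Type*} (A : Set X) (Φ : X × P → EReal) (p : P) : EReal :=
  ⨅ x ∈ A, Φ (x, p)

/-- `λ` is an augmented Lagrange multiplier: for some `r ≥ 0`,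
`v(p) ≥ v(0) + ⟨λ,p⟩ − r σ(p)` for all `p`. -/
def IsAugMult {X P L : Type*} [AddCommGroup P] [Module ℝ P] [AddCommGroup L] [Module ℝ L]
    (A : Set X) (Φ : X × P → EReal) (B : L →ₗ[ℝ] P →ₗ[ℝ] ℝ) (σ : P → EReal) (lam : L) : Prop :=
  ∃ r : ℝ, 0 ≤ r ∧
    ∀ p : P, OptVal A Φ 0 + ((B lam p : ℝ) : EReal) - (r : EReal) * σ p ≤ OptVal A Φ p

/-- The least exact penalty parameter `r(λ)`. -/
def rmin {X P L : Type*} [AddCommGroup P] [Module ℝ P] [AddCommGroup L] [Module ℝ L]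
    (A : Set X) (Φ : X × P → EReal) (B : L →ₗ[ℝ] P →ₗ[ℝ] ℝ) (σ : P → EReal) (lam : L) : ℝ :=
  sInf {r : ℝ | 0 ≤ r ∧
    ∀ p : P, OptVal A Φ 0 + ((B lam p : ℝ) : EReal) - (r : EReal) * σ p ≤ OptVal A Φ p}

/-- The augmented dual function `ψ(λ, r) = inf_{x ∈ A} 𝓛(x, λ, r)`. -/
def DualFun {X P L : Type*} [AddCommGroup P] [Module ℝ P] [AddCommGroup L] [Module ℝ L]
    (A : Set X) (Φ : X × P → EReal) (B : L →ₗ[ℝ] P →ₗ[ℝ] ℝ) (σ : P → EReal)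
    (lam : L) (r : ℝ) : EReal :=
  ⨅ x ∈ A, AugLagr Φ B σ x lam r

/-- `λ` is a local augmented Lagrange multiplier at `xs`. -/
def IsLocalAugMult {X P L : Type*} [TopologicalSpace X]
    [AddCommGroup P] [Module ℝ P] [AddCommGroup L] [Module ℝ L]
    (A : Set X) (f : X → EReal) (Φ : X × P → EReal)
    (B : L →ₗ[ℝ] P →ₗ[ℝ] ℝ) (σ : P → EReal) (xs : X) (lam : L) : Prop :=
  ∃ r₀ : ℝ, 0 ≤ r₀ ∧ ∀ r : ℝ, r₀ ≤ r →
    (∃ U ∈ 𝓝 xs, ∀ x ∈ U ∩ A, AugLagr Φ B σ xs lam r ≤ AugLagr Φ B σ x lam r) ∧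
    AugLagr Φ B σ xs lam r = f xs

/-- `𝒜_loc`: the set of multipliers that are local augmented Lagrange multipliers at every
globally optimal solution of the problem. -/
def Aloc {X P L : Type*} [TopologicalSpace X]
    [AddCommGroup P] [Module ℝ P] [AddCommGroup L] [Module ℝ L]
    (A : Set X) (f : X → EReal) (Φ : X × P → EReal)
    (B : L →ₗ[ℝ] P →ₗ[ℝ] ℝ) (σ : P → EReal) : Set L :=
  {lam | ∀ xs ∈ A, (∀ x ∈ A, f xs ≤ f x) → IsLocalAugMult A f Φ B σ xs lam}

/-- For the sharp Lagrangian (`σ = ‖·‖`, `P` normed, coupling dominated by the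
norm), an augmented Lagrange multiplier exists iff the penalty function
`F(x,r) = inf_p (Φ(x,p) + r ‖p‖)` is exact. -/
theorem sharp_aug_mult_exists_iff_penalty_exact
    {X P L : Type*} [TopologicalSpace X]
    [NormedAddCommGroup P] [NormedSpace ℝ P]
    [AddCommGroup L] [Module ℝ L]
    (A : Set X) (f : X → EReal) (Φ : X × P → EReal)
    (B : L →ₗ[ℝ] P →ₗ[ℝ] ℝ)
    (hA : A.Nonempty) (hdom : ∃ x ∈ A, f x ≠ ⊤) (hfbot : ∀ x, f x ≠ ⊥)
    (hfin : ∃ c : ℝ, (⨅ x ∈ A, f x) = (c : EReal))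
    (hΦ : ∀ x, Φ (x, 0) = f x)
    (hB : ∀ lam : L, ∃ dl : ℝ, 0 ≤ dl ∧ ∀ p : P, |B lam p| ≤ dl * ‖p‖) :
    (∃ lam : L, IsAugMult A Φ B (fun p => ((‖p‖ : ℝ) : EReal)) lam) ↔
      ∃ r : ℝ, 0 ≤ r ∧ ∀ x ∈ A,
        (⨅ y ∈ A, f y) ≤ ⨅ p : P, Φ (x, p) + (r : EReal) * ((‖p‖ : ℝ) : EReal) := by
  obtain ⟨c, hc⟩ := hfin
  have hOpt0 : OptVal A Φ 0 = (c : EReal) := by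
    rw [← hc]; unfold OptVal; simp only [hΦ]
  constructor
  · rintro ⟨lam, r, hr, hineq⟩
    obtain ⟨d, hd0, hd⟩ := hB lam
    refine ⟨r + d, by linarith, fun x hx => ?_⟩
    rw [hc]
    refine le_iInf fun p => ?_
    have h1 : OptVal A Φ p ≤ Φ (x, p) := by
      unfold OptVal; exact iInf₂_le x hx
    have h2 := (hineq p).trans h1
    rw [hOpt0] at h2
    have h3 : ((c + B lam p : ℝ) : EReal) - ((r * ‖p‖ : ℝ) : EReal) ≤ Φ (x, p) := by
      rw [EReal.coe_add, EReal.coe_mul]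
      exact h2
    have h4 : ((c + B lam p : ℝ) : EReal) ≤ Φ (x, p) + ((r * ‖p‖ : ℝ) : EReal) :=
      (EReal.sub_le_iff_le_add (Or.inl (EReal.coe_ne_bot _))
        (Or.inl (EReal.coe_ne_top _))).mp h3
    have h5 : (c : EReal) ≤ ((c + B lam p : ℝ) : EReal) + ((d * ‖p‖ : ℝ) : EReal) := by
      rw [← EReal.coe_add, EReal.coe_le_coe_iff]
      have := (abs_le.mp (hd p)).1
      linarith
    calc (c : EReal) ≤ ((c + B lam p : ℝ) : EReal) + ((d * ‖p‖ : ℝ) : EReal) := h5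
      _ ≤ (Φ (x, p) + ((r * ‖p‖ : ℝ) : EReal)) + ((d * ‖p‖ : ℝ) : EReal) :=
          add_le_add_left h4 _
      _ = Φ (x, p) + ((r + d : ℝ) : EReal) * ((‖p‖ : ℝ) : EReal) := by
          rw [add_assoc, ← EReal.coe_add, ← EReal.coe_mul,
            show r * ‖p‖ + d * ‖p‖ = (r + d) * ‖p‖ from by ring]
  · rintro ⟨r, hr, hpen⟩
    refine ⟨0, r, hr, fun p => ?_⟩
    rw [hOpt0]
    simp only [map_zero, LinearMap.zero_apply, EReal.coe_zero, add_zero]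
    unfold OptVal
    refine le_iInf₂ fun x hx => ?_
    have h1 : (c : EReal) ≤ Φ (x, p) + (r : EReal) * ((‖p‖ : ℝ) : EReal) := by
      have h0 := hpen x hx
      rw [hc] at h0
      exact le_trans h0 (iInf_le _ p)
    have h2 : (c : EReal) ≤ Φ (x, p) + ((r * ‖p‖ : ℝ) : EReal) := by
      rwa [EReal.coe_mul]
    rw [show (r : EReal) * ((‖p‖ : ℝ) : EReal) = ((r * ‖p‖ : ℝ) : EReal) from
      (EReal.coe_mul _ _).symm]
    exact (EReal.sub_le_iff_le_add (Or.inl (EReal.coe_ne_bot _))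
      (Or.inl (EReal.coe_ne_top _))).mpr h2
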